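/- Let n ≥ 2k+1 and let F be a nonempty family of k-subsets of [n] with indicator f, density α = E(f), and let f₁ be the orthogonal projection of f onto the span of the functions x ↦ x_i - k/n (i ∈ [n]), with η = ‖f₁‖²/‖f‖². For each i let γ_i = |{A ∈ F : i ∈ A}|/binom(n-1,k-1), and γ_max = max_i γ_i. Then η³ ≤ ((n-1)/(n-k))³ · γ_max² + 3·((n-1)/(n-k))² · η · α. -/

import Mathlib

open Finset

private lemma countSup {n k : ℕ} (S : Finset (Fin n)) :
    (Finset.univ.filter (fun A : {A : Finset (Fin n) // A.card = k} => S ⊆ A.val)).card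
      = if S.card ≤ k then (n - S.card).choose (k - S.card) else 0 := by
  split_ifs with h
  · have hcard : ((Finset.univ \ S).powersetCard (k - S.card)).card
        = (n - S.card).choose (k - S.card) := by
      rw [Finset.card_powersetCard, Finset.card_sdiff_of_subset (Finset.subset_univ S), Finset.card_univ,
        Fintype.card_fin]
    rw [← hcard]
    apply Finset.card_bij (fun A _ => A.val \ S)
    · intro A hA
      simp only [Finset.mem_filter, Finset.mem_univ, true_and] at hA
      rw [Finset.mem_powersetCard]
      exact ⟨Finset.sdiff_subset_sdiff (Finset.subset_univ _) (Finset.Subset.refl S),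
        by rw [Finset.card_sdiff_of_subset hA, A.2]⟩
    · intro A hA B hB hAB
      simp only [Finset.mem_filter, Finset.mem_univ, true_and] at hA hB
      apply Subtype.ext
      have h1 : A.val \ S ∪ S = B.val \ S ∪ S := by rw [hAB]
      rwa [Finset.sdiff_union_of_subset hA, Finset.sdiff_union_of_subset hB] at h1
    · intro B hB
      rw [Finset.mem_powersetCard] at hB
      obtain ⟨hBsub, hBcard⟩ := hB
      have hdisj : Disjoint B S := (Finset.subset_sdiff.mp hBsub).2
      refine ⟨⟨B ∪ S, ?_⟩, ?_, ?_⟩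
      · rw [Finset.card_union_of_disjoint hdisj, hBcard]
        omega
      · simp only [Finset.mem_filter, Finset.mem_univ, true_and]
        exact Finset.subset_union_right
      · simp only
        rw [Finset.union_sdiff_right, Finset.sdiff_eq_self_iff_disjoint.mpr hdisj]
  · refine Finset.card_eq_zero.mpr (Finset.filter_eq_empty_iff.mpr ?_)
    intro A _
    intro hSA
    have := Finset.card_le_card hSA
    rw [A.2] at this
    omega

variable {n : ℕ} (d : Fin n → ℝ) (cr : ℕ → ℝ)

private lemma filter_mem_eq {β : Type*} [Fintype β] [DecidableEq β] (S : Finset β) :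
    Finset.univ.filter (· ∈ S) = S := by
  ext x; simp

private lemma step1 (hd : ∑ i, d i = 0) (S : Finset (Fin n)) :
    ∑ m, d m * cr (insert m S).card
      = (cr S.card - cr (S.card + 1)) * ∑ m ∈ S, d m := by
  rw [← Finset.sum_filter_add_sum_filter_not Finset.univ (· ∈ S)]
  have h1 : ∑ m ∈ Finset.univ.filter (· ∈ S), d m * cr (insert m S).card
      = cr S.card * ∑ m ∈ S, d m := by
    rw [Finset.mul_sum, filter_mem_eq]
    apply Finset.sum_congr rfl
    intro m hm
    rw [Finset.insert_eq_self.mpr hm, mul_comm]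
  have h2 : ∑ m ∈ Finset.univ.filter (¬ · ∈ S), d m * cr (insert m S).card
      = cr (S.card + 1) * ∑ m ∈ Finset.univ.filter (¬ · ∈ S), d m := by
    rw [Finset.mul_sum]
    apply Finset.sum_congr rfl
    intro m hm
    simp only [Finset.mem_filter] at hm
    rw [Finset.card_insert_of_notMem hm.2, mul_comm]
  have h3 : ∑ m ∈ Finset.univ.filter (¬ · ∈ S), d m = - ∑ m ∈ S, d m := by
    have := Finset.sum_filter_add_sum_filter_not Finset.univ (· ∈ S) d
    rw [hd] at this
    rw [filter_mem_eq] at this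
    linarith
  rw [h1, h2, h3]
  ring

private lemma step3 (hd : ∑ i, d i = 0) (S : Finset (Fin n)) :
    ∑ l, d l * ((cr (insert l S).card - cr ((insert l S).card + 1)) * ∑ m ∈ insert l S, d m)
      = (cr S.card - cr (S.card + 1)) * (∑ m ∈ S, d m) ^ 2
        + (cr (S.card + 1) - cr (S.card + 2))
          * ((∑ i, (d i) ^ 2) - (∑ m ∈ S, (d m) ^ 2) - (∑ m ∈ S, d m) ^ 2) := by
  rw [← Finset.sum_filter_add_sum_filter_not Finset.univ (· ∈ S)]
  have h1 : ∑ l ∈ Finset.univ.filter (· ∈ S),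
        d l * ((cr (insert l S).card - cr ((insert l S).card + 1)) * ∑ m ∈ insert l S, d m)
      = (cr S.card - cr (S.card + 1)) * (∑ m ∈ S, d m) ^ 2 := by
    rw [filter_mem_eq]
    have hc : ∀ l ∈ S,
        d l * ((cr (insert l S).card - cr ((insert l S).card + 1)) * ∑ m ∈ insert l S, d m)
          = (cr S.card - cr (S.card + 1)) * (d l * ∑ m ∈ S, d m) := by
      intro l hl
      rw [Finset.insert_eq_self.mpr hl]
      ring
    rw [Finset.sum_congr rfl hc, ← Finset.mul_sum, ← Finset.sum_mul]
    ring
  have h3 : ∑ l ∈ Finset.univ.filter (¬ · ∈ S), d l = - ∑ m ∈ S, d m := by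
    have := Finset.sum_filter_add_sum_filter_not Finset.univ (· ∈ S) d
    rw [hd, filter_mem_eq] at this
    linarith
  have h4 : ∑ l ∈ Finset.univ.filter (¬ · ∈ S), (d l) ^ 2
      = (∑ i, (d i) ^ 2) - ∑ m ∈ S, (d m) ^ 2 := by
    have := Finset.sum_filter_add_sum_filter_not Finset.univ (· ∈ S) (fun i => (d i) ^ 2)
    rw [filter_mem_eq] at this
    linarith
  have h2 : ∑ l ∈ Finset.univ.filter (¬ · ∈ S),
        d l * ((cr (insert l S).card - cr ((insert l S).card + 1)) * ∑ m ∈ insert l S, d m)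
      = (cr (S.card + 1) - cr (S.card + 2))
          * (((∑ i, (d i) ^ 2) - ∑ m ∈ S, (d m) ^ 2) - (∑ m ∈ S, d m) ^ 2) := by
    have hcongr : ∀ l ∈ Finset.univ.filter (¬ · ∈ S),
        d l * ((cr (insert l S).card - cr ((insert l S).card + 1)) * ∑ m ∈ insert l S, d m)
          = (cr (S.card + 1) - cr (S.card + 2)) * ((d l) ^ 2 + d l * ∑ m ∈ S, d m) := by
      intro l hl
      simp only [Finset.mem_filter] at hl
      rw [Finset.card_insert_of_notMem hl.2, Finset.sum_insert hl.2]
      ring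
    rw [Finset.sum_congr rfl hcongr, ← Finset.mul_sum]
    congr 1
    rw [Finset.sum_add_distrib, h4, ← Finset.sum_mul, h3]
    ring
  rw [h1, h2]

private lemma step2 (hd : ∑ i, d i = 0) (S : Finset (Fin n)) :
    ∑ j, d j * ((cr (insert j S).card - cr ((insert j S).card + 1)) * (∑ m ∈ insert j S, d m) ^ 2
        + (cr ((insert j S).card + 1) - cr ((insert j S).card + 2))
          * ((∑ i, (d i) ^ 2) - (∑ m ∈ insert j S, (d m) ^ 2) - (∑ m ∈ insert j S, d m) ^ 2))
      = ((cr S.card - cr (S.card + 1)) * (∑ m ∈ S, d m) ^ 2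
          + (cr (S.card + 1) - cr (S.card + 2))
            * ((∑ i, (d i) ^ 2) - (∑ m ∈ S, (d m) ^ 2) - (∑ m ∈ S, d m) ^ 2)) * (∑ m ∈ S, d m)
        + (cr (S.card + 1) - cr (S.card + 2))
          * (((∑ i, (d i) ^ 3) - ∑ m ∈ S, (d m) ^ 3)
            + 2 * (∑ m ∈ S, d m) * ((∑ i, (d i) ^ 2) - ∑ m ∈ S, (d m) ^ 2)
            - (∑ m ∈ S, d m) ^ 3)
        + (cr (S.card + 2) - cr (S.card + 3))
          * ((∑ m ∈ S, d m) ^ 3 - 3 * (∑ m ∈ S, d m) * ((∑ i, (d i) ^ 2) - ∑ m ∈ S, (d m) ^ 2)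
            - 2 * ((∑ i, (d i) ^ 3) - ∑ m ∈ S, (d m) ^ 3)) := by
  have h3 : ∑ l ∈ Finset.univ.filter (¬ · ∈ S), d l = - ∑ m ∈ S, d m := by
    have := Finset.sum_filter_add_sum_filter_not Finset.univ (· ∈ S) d
    rw [hd, filter_mem_eq] at this
    linarith
  have h4 : ∑ l ∈ Finset.univ.filter (¬ · ∈ S), (d l) ^ 2
      = (∑ i, (d i) ^ 2) - ∑ m ∈ S, (d m) ^ 2 := by
    have := Finset.sum_filter_add_sum_filter_not Finset.univ (· ∈ S) (fun i => (d i) ^ 2)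
    rw [filter_mem_eq] at this
    linarith
  have h5 : ∑ l ∈ Finset.univ.filter (¬ · ∈ S), (d l) ^ 3
      = (∑ i, (d i) ^ 3) - ∑ m ∈ S, (d m) ^ 3 := by
    have := Finset.sum_filter_add_sum_filter_not Finset.univ (· ∈ S) (fun i => (d i) ^ 3)
    rw [filter_mem_eq] at this
    linarith
  rw [← Finset.sum_filter_add_sum_filter_not Finset.univ (· ∈ S)]
  have h1 : ∑ j ∈ Finset.univ.filter (· ∈ S),
        d j * ((cr (insert j S).card - cr ((insert j S).card + 1)) * (∑ m ∈ insert j S, d m) ^ 2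
          + (cr ((insert j S).card + 1) - cr ((insert j S).card + 2))
            * ((∑ i, (d i) ^ 2) - (∑ m ∈ insert j S, (d m) ^ 2) - (∑ m ∈ insert j S, d m) ^ 2))
      = ((cr S.card - cr (S.card + 1)) * (∑ m ∈ S, d m) ^ 2
          + (cr (S.card + 1) - cr (S.card + 2))
            * ((∑ i, (d i) ^ 2) - (∑ m ∈ S, (d m) ^ 2) - (∑ m ∈ S, d m) ^ 2))
          * (∑ m ∈ S, d m) := by
    rw [filter_mem_eq]
    have hc : ∀ j ∈ S,
        d j * ((cr (insert j S).card - cr ((insert j S).card + 1)) * (∑ m ∈ insert j S, d m) ^ 2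
          + (cr ((insert j S).card + 1) - cr ((insert j S).card + 2))
            * ((∑ i, (d i) ^ 2) - (∑ m ∈ insert j S, (d m) ^ 2) - (∑ m ∈ insert j S, d m) ^ 2))
          = ((cr S.card - cr (S.card + 1)) * (∑ m ∈ S, d m) ^ 2
              + (cr (S.card + 1) - cr (S.card + 2))
                * ((∑ i, (d i) ^ 2) - (∑ m ∈ S, (d m) ^ 2) - (∑ m ∈ S, d m) ^ 2)) * d j := by
      intro j hj
      rw [Finset.insert_eq_self.mpr hj]
      ring
    rw [Finset.sum_congr rfl hc, ← Finset.mul_sum]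
  have h2 : ∑ j ∈ Finset.univ.filter (¬ · ∈ S),
        d j * ((cr (insert j S).card - cr ((insert j S).card + 1)) * (∑ m ∈ insert j S, d m) ^ 2
          + (cr ((insert j S).card + 1) - cr ((insert j S).card + 2))
            * ((∑ i, (d i) ^ 2) - (∑ m ∈ insert j S, (d m) ^ 2) - (∑ m ∈ insert j S, d m) ^ 2))
      = ((cr (S.card + 1) - cr (S.card + 2)) - 2 * (cr (S.card + 2) - cr (S.card + 3)))
            * ((∑ i, (d i) ^ 3) - ∑ m ∈ S, (d m) ^ 3)
        + (2 * (∑ m ∈ S, d m)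
            * ((cr (S.card + 1) - cr (S.card + 2)) - (cr (S.card + 2) - cr (S.card + 3))))
            * ((∑ i, (d i) ^ 2) - ∑ m ∈ S, (d m) ^ 2)
        + ((cr (S.card + 1) - cr (S.card + 2)) * (∑ m ∈ S, d m) ^ 2
            + (cr (S.card + 2) - cr (S.card + 3))
              * ((∑ i, (d i) ^ 2) - (∑ m ∈ S, (d m) ^ 2) - (∑ m ∈ S, d m) ^ 2))
            * (- ∑ m ∈ S, d m) := by
    have hc : ∀ j ∈ Finset.univ.filter (¬ · ∈ S),
        d j * ((cr (insert j S).card - cr ((insert j S).card + 1)) * (∑ m ∈ insert j S, d m) ^ 2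
          + (cr ((insert j S).card + 1) - cr ((insert j S).card + 2))
            * ((∑ i, (d i) ^ 2) - (∑ m ∈ insert j S, (d m) ^ 2) - (∑ m ∈ insert j S, d m) ^ 2))
          = ((cr (S.card + 1) - cr (S.card + 2)) - 2 * (cr (S.card + 2) - cr (S.card + 3)))
              * (d j) ^ 3
            + (2 * (∑ m ∈ S, d m)
                * ((cr (S.card + 1) - cr (S.card + 2)) - (cr (S.card + 2) - cr (S.card + 3))))
              * (d j) ^ 2
            + ((cr (S.card + 1) - cr (S.card + 2)) * (∑ m ∈ S, d m) ^ 2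
                + (cr (S.card + 2) - cr (S.card + 3))
                  * ((∑ i, (d i) ^ 2) - (∑ m ∈ S, (d m) ^ 2) - (∑ m ∈ S, d m) ^ 2))
              * (d j) := by
      intro j hj
      simp only [Finset.mem_filter] at hj
      rw [Finset.card_insert_of_notMem hj.2, Finset.sum_insert hj.2,
        Finset.sum_insert hj.2]
      ring
    rw [Finset.sum_congr rfl hc]
    rw [Finset.sum_add_distrib, Finset.sum_add_distrib, ← Finset.mul_sum, ← Finset.mul_sum,
      ← Finset.mul_sum, h3, h4, h5]
  rw [h1, h2]
  ring

private lemma quartic_id {k : ℕ} (hd : ∑ i, d i = 0)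
    (hcr : ∀ S : Finset (Fin n),
      (∑ A : {A : Finset (Fin n) // A.card = k}, (if S ⊆ A.val then (1 : ℝ) else 0)) = cr S.card) :
    ∑ A : {A : Finset (Fin n) // A.card = k}, (∑ i ∈ A.val, d i) ^ 4
      = 3 * (cr 2 - 2 * cr 3 + cr 4) * (∑ i, (d i) ^ 2) ^ 2
        + (cr 1 - 7 * cr 2 + 12 * cr 3 - 6 * cr 4) * (∑ i, (d i) ^ 4) := by
  classical
  have hAcount : ∀ (S : Finset (Fin n)) (w : ℝ),
      (∑ A : {A : Finset (Fin n) // A.card = k}, (if S ⊆ A.val then w else 0)) = w * cr S.card := by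
    intro S w
    rw [← hcr S, Finset.mul_sum]
    apply Finset.sum_congr rfl
    intro A _
    split_ifs <;> simp
  have e2 : ∀ A : {A : Finset (Fin n) // A.card = k}, (∑ i ∈ A.val, d i) ^ 4
      = ∑ i, ∑ j, ∑ l, ∑ m,
          (if insert m (insert l (insert j ({i} : Finset (Fin n)))) ⊆ A.val
            then d i * (d j * (d l * d m)) else 0) := by
    intro A
    have h0 : (∑ i ∈ A.val, d i) = ∑ i, (if i ∈ A.val then d i else 0) := by
      rw [Finset.sum_ite_mem, Finset.univ_inter]
    rw [h0, show ∀ y : ℝ, y ^ 4 = y * (y * (y * y)) from fun y => by ring]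
    simp only [Finset.mul_sum, Finset.sum_mul]
    apply Finset.sum_congr rfl; intro i _
    apply Finset.sum_congr rfl; intro j _
    apply Finset.sum_congr rfl; intro l _
    apply Finset.sum_congr rfl; intro m _
    by_cases hi : i ∈ A.val <;> by_cases hj : j ∈ A.val <;> by_cases hl : l ∈ A.val
      <;> by_cases hm : m ∈ A.val
      <;> simp [Finset.insert_subset_iff, hi, hj, hl, hm] <;> ring
  calc ∑ A : {A : Finset (Fin n) // A.card = k}, (∑ i ∈ A.val, d i) ^ 4
      = ∑ A : {A : Finset (Fin n) // A.card = k}, ∑ i, ∑ j, ∑ l, ∑ m,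
          (if insert m (insert l (insert j ({i} : Finset (Fin n)))) ⊆ A.val
            then d i * (d j * (d l * d m)) else 0) := Finset.sum_congr rfl (fun A _ => e2 A)
    _ = ∑ i, ∑ j, ∑ l, ∑ m,
          (d i * (d j * (d l * d m))) * cr (insert m (insert l (insert j ({i} : Finset (Fin n))))).card := by
        rw [Finset.sum_comm]
        apply Finset.sum_congr rfl; intro i _
        rw [Finset.sum_comm]
        apply Finset.sum_congr rfl; intro j _
        rw [Finset.sum_comm]
        apply Finset.sum_congr rfl; intro l _
        rw [Finset.sum_comm]
        apply Finset.sum_congr rfl; intro m _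
        exact hAcount _ _
    _ = ∑ i, ∑ j, ∑ l, (d i * (d j * d l)) *
          ((cr (insert l (insert j ({i} : Finset (Fin n)))).card
            - cr ((insert l (insert j ({i} : Finset (Fin n)))).card + 1))
            * ∑ m ∈ insert l (insert j ({i} : Finset (Fin n))), d m) := by
        apply Finset.sum_congr rfl; intro i _
        apply Finset.sum_congr rfl; intro j _
        apply Finset.sum_congr rfl; intro l _
        rw [← step1 d cr hd (insert l (insert j ({i} : Finset (Fin n)))), Finset.mul_sum]
        apply Finset.sum_congr rfl; intro m _
        ring
    _ = ∑ i, ∑ j, (d i * d j) *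
          ((cr (insert j ({i} : Finset (Fin n))).card
              - cr ((insert j ({i} : Finset (Fin n))).card + 1))
              * (∑ m ∈ insert j ({i} : Finset (Fin n)), d m) ^ 2
            + (cr ((insert j ({i} : Finset (Fin n))).card + 1)
              - cr ((insert j ({i} : Finset (Fin n))).card + 2))
              * ((∑ i, (d i) ^ 2) - (∑ m ∈ insert j ({i} : Finset (Fin n)), (d m) ^ 2)
                - (∑ m ∈ insert j ({i} : Finset (Fin n)), d m) ^ 2)) := by
        apply Finset.sum_congr rfl; intro i _
        apply Finset.sum_congr rfl; intro j _
        rw [← step3 d cr hd (insert j ({i} : Finset (Fin n))), Finset.mul_sum]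
        apply Finset.sum_congr rfl; intro l _
        ring
    _ = ∑ i, d i *
          (((cr ({i} : Finset (Fin n)).card - cr (({i} : Finset (Fin n)).card + 1))
              * (∑ m ∈ ({i} : Finset (Fin n)), d m) ^ 2
            + (cr (({i} : Finset (Fin n)).card + 1) - cr (({i} : Finset (Fin n)).card + 2))
              * ((∑ i, (d i) ^ 2) - (∑ m ∈ ({i} : Finset (Fin n)), (d m) ^ 2)
                - (∑ m ∈ ({i} : Finset (Fin n)), d m) ^ 2)) * (∑ m ∈ ({i} : Finset (Fin n)), d m)
          + (cr (({i} : Finset (Fin n)).card + 1) - cr (({i} : Finset (Fin n)).card + 2))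
            * (((∑ i, (d i) ^ 3) - ∑ m ∈ ({i} : Finset (Fin n)), (d m) ^ 3)
              + 2 * (∑ m ∈ ({i} : Finset (Fin n)), d m)
                * ((∑ i, (d i) ^ 2) - ∑ m ∈ ({i} : Finset (Fin n)), (d m) ^ 2)
              - (∑ m ∈ ({i} : Finset (Fin n)), d m) ^ 3)
          + (cr (({i} : Finset (Fin n)).card + 2) - cr (({i} : Finset (Fin n)).card + 3))
            * ((∑ m ∈ ({i} : Finset (Fin n)), d m) ^ 3
              - 3 * (∑ m ∈ ({i} : Finset (Fin n)), d m)
                * ((∑ i, (d i) ^ 2) - ∑ m ∈ ({i} : Finset (Fin n)), (d m) ^ 2)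
              - 2 * ((∑ i, (d i) ^ 3) - ∑ m ∈ ({i} : Finset (Fin n)), (d m) ^ 3))) := by
        apply Finset.sum_congr rfl; intro i _
        rw [← step2 d cr hd ({i} : Finset (Fin n)), Finset.mul_sum]
        apply Finset.sum_congr rfl; intro j _
        ring
    _ = ∑ i, (((cr 1 - cr 2) - 6 * (cr 2 - cr 3) + 6 * (cr 3 - cr 4)) * (d i) ^ 4
          + (3 * ((cr 2 - cr 3) - (cr 3 - cr 4)) * (∑ i, (d i) ^ 2)) * (d i) ^ 2
          + (((cr 2 - cr 3) - 2 * (cr 3 - cr 4)) * (∑ i, (d i) ^ 3)) * d i) := by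
        apply Finset.sum_congr rfl; intro i _
        simp only [Finset.card_singleton, Finset.sum_singleton]
        ring
    _ = 3 * (cr 2 - 2 * cr 3 + cr 4) * (∑ i, (d i) ^ 2) ^ 2
        + (cr 1 - 7 * cr 2 + 12 * cr 3 - 6 * cr 4) * (∑ i, (d i) ^ 4) := by
        rw [Finset.sum_add_distrib, Finset.sum_add_distrib, ← Finset.mul_sum, ← Finset.mul_sum,
          ← Finset.mul_sum, hd]
        ring

private lemma sub_mul_choose (M j : ℕ) : (M + 1 - j) * (M + 1).choose j = (M + 1) * M.choose j := by
  have h1 : (M + 1).choose (j + 1) * (j + 1) = (M + 1).choose j * (M + 1 - j) :=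
    Nat.choose_succ_right_eq (M + 1) j
  have h2 : (M + 1) * M.choose j = (M + 1).choose (j + 1) * (j + 1) :=
    Nat.add_one_mul_choose_eq M j
  rw [h2, h1, mul_comm]

private lemma nat_id1 {n k : ℕ} (hk : 1 ≤ k) (hkn : k ≤ n) :
    k * n.choose k = n * (n - 1).choose (k - 1) := by
  obtain ⟨k', rfl⟩ : ∃ k', k = k' + 1 := ⟨k - 1, by omega⟩
  obtain ⟨n', rfl⟩ : ∃ n', n = n' + 1 := ⟨n - 1, by omega⟩
  simp only [Nat.add_sub_cancel]
  have := Nat.add_one_mul_choose_eq n' k'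
  rw [this]
  ring

-- (n-1) * C(n-2, k-1) = (n-k) * C(n-1, k-1),  for 1 ≤ k ≤ n-1
private lemma nat_id2 {n k : ℕ} (hk : 1 ≤ k) (hkn : k + 1 ≤ n) :
    (n - 1) * (n - 2).choose (k - 1) = (n - k) * (n - 1).choose (k - 1) := by
  obtain ⟨k', rfl⟩ : ∃ k', k = k' + 1 := ⟨k - 1, by omega⟩
  obtain ⟨m, rfl⟩ : ∃ m, n = m + k' + 2 := ⟨n - k' - 2, by omega⟩
  have h : (m + k' + 2) - 1 = (m + k' ) + 1 := by omega
  have h2 : (m + k' + 2) - 2 = m + k' := by omega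
  have h3 : (m + k' + 2) - (k' + 1) = m + 1 := by omega
  rw [h, h2, h3, Nat.add_sub_cancel]
  have := sub_mul_choose (m + k') k'
  have h4 : m + k' + 1 - k' = m + 1 := by omega
  rw [h4] at this
  omega

-- Pascal at shifted args: C(n-1,k-1) = C(n-2,k-2) + C(n-2,k-1), for 2 ≤ k ≤ n
private lemma nat_pascal {n k : ℕ} (hk : 2 ≤ k) (hkn : k ≤ n) :
    (n - 1).choose (k - 1) = (n - 2).choose (k - 2) + (n - 2).choose (k - 1) := by
  obtain ⟨k', rfl⟩ : ∃ k', k = k' + 2 := ⟨k - 2, by omega⟩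
  obtain ⟨m, rfl⟩ : ∃ m, n = m + k' + 2 := ⟨n - k' - 2, by omega⟩
  have h : (m + k' + 2) - 1 = (m + k') + 1 := by omega
  have h2 : (m + k' + 2) - 2 = m + k' := by omega
  have h3 : k' + 2 - 1 = k' + 1 := by omega
  rw [h, h2, h3, Nat.add_sub_cancel]
  exact Nat.choose_succ_succ (m + k') k'

-- C(n-4,k-4) ≤ C(n-3,k-3) for 4 ≤ k ≤ n
private lemma nat_p3 {n k : ℕ} (hk : 4 ≤ k) (hkn : k ≤ n) :
    (n - 4).choose (k - 4) ≤ (n - 3).choose (k - 3) := by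
  obtain ⟨k', rfl⟩ : ∃ k', k = k' + 4 := ⟨k - 4, by omega⟩
  obtain ⟨m, rfl⟩ : ∃ m, n = m + k' + 4 := ⟨n - k' - 4, by omega⟩
  have h : (m + k' + 4) - 4 = m + k' := by omega
  have h2 : (m + k' + 4) - 3 = (m + k') + 1 := by omega
  have h3 : k' + 4 - 3 = k' + 1 := by omega
  rw [h, h2, h3, Nat.add_sub_cancel]
  rw [Nat.choose_succ_succ (m + k') k']
  omega

-- 12 * C(n-3,k-3) ≤ 7 * C(n-2,k-2) for 3 ≤ k, 2k+1 ≤ n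
private lemma nat_p5 {n k : ℕ} (hk : 3 ≤ k) (hn : 2 * k + 1 ≤ n) :
    12 * (n - 3).choose (k - 3) ≤ 7 * (n - 2).choose (k - 2) := by
  obtain ⟨a, rfl⟩ : ∃ a, k = a + 3 := ⟨k - 3, by omega⟩
  obtain ⟨m, rfl⟩ : ∃ m, n = m + 2 * a + 7 := ⟨n - 2 * a - 7, by omega⟩
  have h : (m + 2 * a + 7) - 3 = m + 2 * a + 4 := by omega
  have h2 : (m + 2 * a + 7) - 2 = (m + 2 * a + 4) + 1 := by omega
  have h3 : a + 3 - 3 = a := by omega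
  have h4 : a + 3 - 2 = a + 1 := by omega
  rw [h, h2, h3, h4]
  have hid := Nat.add_one_mul_choose_eq (m + 2 * a + 4) a
  -- (m+2a+5) * C(m+2a+4, a) = C(m+2a+5, a+1) * (a+1)
  have hmul : 12 * (a + 1) ≤ 7 * (m + 2 * a + 5) := by omega
  have key : (m + 2 * a + 5) * (12 * (m + 2 * a + 4).choose a)
      ≤ (m + 2 * a + 5) * (7 * (m + 2 * a + 4 + 1).choose (a + 1)) := by
    calc (m + 2 * a + 5) * (12 * (m + 2 * a + 4).choose a)
        = 12 * ((m + 2 * a + 4 + 1) * (m + 2 * a + 4).choose a) := by ring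
      _ = 12 * ((m + 2 * a + 4 + 1).choose (a + 1) * (a + 1)) := by rw [hid]
      _ = (12 * (a + 1)) * (m + 2 * a + 4 + 1).choose (a + 1) := by ring
      _ ≤ (7 * (m + 2 * a + 5)) * (m + 2 * a + 4 + 1).choose (a + 1) :=
          Nat.mul_le_mul_right _ hmul
      _ = (m + 2 * a + 5) * (7 * (m + 2 * a + 4 + 1).choose (a + 1)) := by ring
  exact Nat.le_of_mul_le_mul_left key (by omega)

-- C(n,k) * C(n-3,k-2) ≤ C(n-1,k-1)^2 for 2 ≤ k, 2k+1 ≤ n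
private lemma nat_p4 {n k : ℕ} (hk : 2 ≤ k) (hn : 2 * k + 1 ≤ n) :
    n.choose k * (n - 3).choose (k - 2) ≤ (n - 1).choose (k - 1) * (n - 1).choose (k - 1) := by
  obtain ⟨a, rfl⟩ : ∃ a, k = a + 2 := ⟨k - 2, by omega⟩
  obtain ⟨m, rfl⟩ : ∃ m, n = m + 2 * a + 5 := ⟨n - 2 * a - 5, by omega⟩
  have h1 : (m + 2 * a + 5) - 1 = m + 2 * a + 4 := by omega
  have h2 : (m + 2 * a + 5) - 3 = m + 2 * a + 2 := by omega
  have h3 : a + 2 - 1 = a + 1 := by omega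
  have h4 : a + 2 - 2 = a := by omega
  rw [h1, h2, h3, h4]
  set P := (m + 2 * a + 5).choose (a + 2) with hP
  set Q := (m + 2 * a + 4).choose (a + 1) with hQ
  set R := (m + 2 * a + 3).choose a with hR
  set T := (m + 2 * a + 2).choose a with hT
  have i1 : (m + 2 * a + 5) * Q = P * (a + 2) := by
    have := Nat.add_one_mul_choose_eq (m + 2 * a + 4) (a + 1)
    simpa [hP, hQ] using this
  have i2 : (m + 2 * a + 4) * R = Q * (a + 1) := by
    have := Nat.add_one_mul_choose_eq (m + 2 * a + 3) a
    simpa [hQ, hR] using this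
  have i3 : (m + a + 3) * R = (m + 2 * a + 3) * T := by
    have := sub_mul_choose (m + 2 * a + 2) a
    have h5 : m + 2 * a + 2 + 1 - a = m + a + 3 := by omega
    have h6 : m + 2 * a + 2 + 1 = m + 2 * a + 3 := by omega
    rw [h5, h6] at this
    simpa [hR, hT] using this
  -- multiply the goal P * T ≤ Q * Q by κ = (a+2)*(a+1)*(m+a+3)
  have hpoly : (a + 1) * (m + a + 3) * (m + 2 * a + 5) ≤ (a + 2) * (m + 2 * a + 4) * (m + 2 * a + 3) := by
    have hexp : (a + 2) * (m + 2 * a + 4) * (m + 2 * a + 3)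
        = (a + 1) * (m + a + 3) * (m + 2 * a + 5)
          + (m ^ 2 + a ^ 2 * m + 4 * a * m + 6 * m + 2 * a ^ 3 + 9 * a ^ 2 + 14 * a + 9) := by
      ring
    omega
  have hL : ((a + 2) * (a + 1) * (m + a + 3)) * (P * T)
      = ((a + 1) * (m + a + 3) * (m + 2 * a + 5)) * (Q * T) := by
    calc ((a + 2) * (a + 1) * (m + a + 3)) * (P * T)
        = (P * (a + 2)) * ((a + 1) * (m + a + 3) * T) := by ring
      _ = ((m + 2 * a + 5) * Q) * ((a + 1) * (m + a + 3) * T) := by rw [i1]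
      _ = ((a + 1) * (m + a + 3) * (m + 2 * a + 5)) * (Q * T) := by ring
  have hRt : ((a + 2) * (a + 1) * (m + a + 3)) * (Q * Q)
      = ((a + 2) * (m + 2 * a + 4) * (m + 2 * a + 3)) * (Q * T) := by
    calc ((a + 2) * (a + 1) * (m + a + 3)) * (Q * Q)
        = (a + 2) * ((m + a + 3) * ((Q * (a + 1)) * Q)) := by ring
      _ = (a + 2) * ((m + a + 3) * (((m + 2 * a + 4) * R) * Q)) := by rw [i2]
      _ = (a + 2) * ((m + 2 * a + 4) * (((m + a + 3) * R) * Q)) := by ring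
      _ = (a + 2) * ((m + 2 * a + 4) * (((m + 2 * a + 3) * T) * Q)) := by rw [i3]
      _ = ((a + 2) * (m + 2 * a + 4) * (m + 2 * a + 3)) * (Q * T) := by ring
  have : ((a + 2) * (a + 1) * (m + a + 3)) * (P * T)
      ≤ ((a + 2) * (a + 1) * (m + a + 3)) * (Q * Q) := by
    rw [hL, hRt]
    exact Nat.mul_le_mul_right _ hpoly
  exact Nat.le_of_mul_le_mul_left this (by positivity)

set_option maxHeartbeats 1000000 in
set_option maxRecDepth 10000 in
/-- Lemma `gammamax`: for a nonempty family `F` of `k`-subsets of `[n]` with indicator `f`,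
density `α`, and `f₁` the orthogonal projection of `f` onto the span of the functions
`A ↦ 1_{i ∈ A} - k/n`, with `η = ‖f₁‖²/‖f‖²` and star-densities `γ i` with maximum
`γmax`, one has `η³ ≤ ((n-1)/(n-k))³·γmax² + 3·((n-1)/(n-k))²·η·α`. -/
theorem stmt_10 (n k : ℕ) (hn : 2 * k + 1 ≤ n) (hk : 1 ≤ k)
    (F : Finset {A : Finset (Fin n) // A.card = k}) (hF : F.Nonempty)
    (α : ℝ) (hα : α = (F.card : ℝ) / (n.choose k : ℝ))
    (f : {A : Finset (Fin n) // A.card = k} → ℝ)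
    (hf : f = fun A => if A ∈ F then (1 : ℝ) else 0)
    (φ : Fin n → {A : Finset (Fin n) // A.card = k} → ℝ)
    (hφ : φ = fun i A => (if i ∈ A.val then (1 : ℝ) else 0) - (k : ℝ) / n)
    (f₁ : {A : Finset (Fin n) // A.card = k} → ℝ)
    (hf₁mem : f₁ ∈ Submodule.span ℝ (Set.range φ))
    (hf₁orth : ∀ i : Fin n, ∑ A, (f A - f₁ A) * φ i A = 0)
    (η : ℝ) (hη : η * ∑ A, (f A) ^ 2 = ∑ A, (f₁ A) ^ 2)
    (γ : Fin n → ℝ)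
    (hγ : γ = fun i => ((F.filter (fun A => i ∈ A.val)).card : ℝ) / ((n - 1).choose (k - 1) : ℝ))
    (γmax : ℝ) (hγmax : IsGreatest (Set.range γ) γmax) :
    η ^ 3 ≤ (((n : ℝ) - 1) / ((n : ℝ) - k)) ^ 3 * γmax ^ 2
        + 3 * (((n : ℝ) - 1) / ((n : ℝ) - k)) ^ 2 * η * α := by
  classical
  have hkn : k ≤ n := by omega
  have hn3 : 3 ≤ n := by omega
  set cc : ℝ := ((n : ℝ) - 1) / ((n : ℝ) - k) with hcc
  set d : Fin n → ℝ := fun i => γ i - α with hd_def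
  set s2 : ℝ := ∑ i, d i ^ 2 with hs2_def
  set s4 : ℝ := ∑ i, d i ^ 4 with hs4_def
  set cr : ℕ → ℝ := fun r => if r ≤ k then (((n - r).choose (k - r) : ℕ) : ℝ) else 0 with hcr_def
  set g : {A : Finset (Fin n) // A.card = k} → ℝ := fun A => ∑ i ∈ A.val, d i with hg_def
  -- numeric positivity
  have hC1pos : (0 : ℝ) < ((n - 1).choose (k - 1) : ℝ) := by
    exact_mod_cast Nat.choose_pos (by omega : k - 1 ≤ n - 1)
  have hNpos : (0 : ℝ) < (n.choose k : ℝ) := by exact_mod_cast Nat.choose_pos hkn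
  have hFpos : (0 : ℝ) < (F.card : ℝ) := by exact_mod_cast Finset.card_pos.mpr hF
  have hαpos : 0 < α := by rw [hα]; exact div_pos hFpos hNpos
  have hnR : (0 : ℝ) < (n : ℝ) := by exact_mod_cast (by omega : 0 < n)
  have hnkR : (0 : ℝ) < (n : ℝ) - k := by
    have : (k : ℝ) + 1 ≤ (n : ℝ) := by exact_mod_cast (by omega : k + 1 ≤ n)
    linarith
  have hccpos : 0 < cc := by
    rw [hcc]; apply div_pos _ hnkR
    have : (1 : ℝ) < (n : ℝ) := by exact_mod_cast (by omega : 1 < n)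
    linarith
  have hcr1 : cr 1 = ((n - 1).choose (k - 1) : ℝ) := by simp [hcr_def, hk]
  have hcr1pos : 0 < cr 1 := by rw [hcr1]; exact hC1pos
  have hcrnn : ∀ r, 0 ≤ cr r := by
    intro r; rw [hcr_def]; dsimp only; split <;> positivity
  -- counting
  have hcount : ∀ S : Finset (Fin n),
      (∑ A : {A : Finset (Fin n) // A.card = k}, if S ⊆ A.val then (1 : ℝ) else 0)
        = cr S.card := by
    intro S
    rw [Finset.sum_boole, countSup S, hcr_def]
    by_cases h : S.card ≤ k <;> simp [h]
  have hAcountW : ∀ (S : Finset (Fin n)) (w : ℝ),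
      (∑ A : {A : Finset (Fin n) // A.card = k}, if S ⊆ A.val then w else 0) = w * cr S.card := by
    intro S w
    rw [← hcount S, Finset.mul_sum]
    apply Finset.sum_congr rfl
    intro A _
    split_ifs <;> simp
  -- degree identities
  have hID1R : (k : ℝ) * (n.choose k : ℝ) = (n : ℝ) * ((n - 1).choose (k - 1) : ℝ) := by
    exact_mod_cast nat_id1 hk hkn
  have hdeg : ∀ i, ((F.filter (fun A => i ∈ A.val)).card : ℝ)
      = γ i * ((n - 1).choose (k - 1) : ℝ) := by
    intro i
    rw [hγ]
    field_simp
  have hγsum : ∑ i, γ i = (n : ℝ) * α := by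
    have hFN : (F.card : ℝ) = α * (n.choose k : ℝ) := by
      rw [hα]; clear hdeg; field_simp
    have h2 : ∑ i, ((F.filter (fun A => i ∈ A.val)).card : ℝ) = (k : ℝ) * (F.card : ℝ) := by
      have e1 : ∀ i : Fin n, ((F.filter (fun A => i ∈ A.val)).card : ℝ)
          = ∑ A ∈ F, (if i ∈ A.val then (1 : ℝ) else 0) := by
        intro i; rw [Finset.sum_boole]
      rw [Finset.sum_congr rfl (fun i _ => e1 i), Finset.sum_comm]
      have e2 : ∀ A : {A : Finset (Fin n) // A.card = k}, A ∈ F →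
          ∑ i, (if i ∈ A.val then (1 : ℝ) else 0) = (k : ℝ) := by
        intro A _
        rw [Finset.sum_boole]
        norm_cast
        rw [show (Finset.univ.filter (fun i => i ∈ A.val)) = A.val from by ext x; simp]
        exact A.2
      rw [Finset.sum_congr rfl e2, Finset.sum_const, nsmul_eq_mul, mul_comm]
    have h3 : (∑ i, γ i) * ((n - 1).choose (k - 1) : ℝ)
        = ((n : ℝ) * α) * ((n - 1).choose (k - 1) : ℝ) := by
      rw [Finset.sum_mul]
      calc ∑ i, γ i * ((n - 1).choose (k - 1) : ℝ)
          = ∑ i, ((F.filter (fun A => i ∈ A.val)).card : ℝ) :=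
            Finset.sum_congr rfl (fun i _ => (hdeg i).symm)
        _ = (k : ℝ) * (F.card : ℝ) := h2
        _ = (k : ℝ) * (α * (n.choose k : ℝ)) := by rw [hFN]
        _ = α * ((k : ℝ) * (n.choose k : ℝ)) := by ring
        _ = α * ((n : ℝ) * ((n - 1).choose (k - 1) : ℝ)) := by rw [hID1R]
        _ = ((n : ℝ) * α) * ((n - 1).choose (k - 1) : ℝ) := by ring
    exact mul_right_cancel₀ (ne_of_gt hC1pos) h3
  have hd0 : ∑ i, d i = 0 := by
    rw [hd_def]
    rw [Finset.sum_sub_distrib, hγsum]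
    simp [Finset.card_univ, mul_comm]
  -- γmax facts
  have hγub : ∀ i, γ i ≤ γmax := fun i => hγmax.2 ⟨i, rfl⟩
  have hγnn : ∀ i, 0 ≤ γ i := by
    intro i; rw [hγ]; clear hdeg; positivity
  have hγmaxnn : 0 ≤ γmax := by
    obtain ⟨i0, hi0⟩ := hγmax.1
    exact hi0 ▸ hγnn i0
  have hγmaxα : α ≤ γmax := by
    by_contra hcon
    push_neg at hcon
    have h1 : ∑ i, γ i < ∑ _i : Fin n, α := by
      apply Finset.sum_lt_sum_of_nonempty
      · exact Finset.univ_nonempty_iff.mpr (Fin.pos_iff_nonempty.mp (by omega))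
      · intro i _; exact lt_of_le_of_lt (hγub i) hcon
    rw [hγsum] at h1
    simp [Finset.card_univ, mul_comm] at h1
  have hd_sq : ∀ i, d i ^ 2 ≤ γmax ^ 2 := by
    intro i
    apply sq_le_sq'
    · rw [hd_def]; dsimp only; have := hγnn i; linarith
    · rw [hd_def]; dsimp only; have := hγub i; linarith
  have hs2nn : 0 ≤ s2 := by rw [hs2_def]; positivity
  have hs4nn : 0 ≤ s4 := by rw [hs4_def]; positivity
  have hs4le : s4 ≤ γmax ^ 2 * s2 := by
    rw [hs4_def, hs2_def, Finset.mul_sum]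
    apply Finset.sum_le_sum
    intro i _
    calc d i ^ 4 = d i ^ 2 * d i ^ 2 := by ring
      _ ≤ γmax ^ 2 * d i ^ 2 := mul_le_mul_of_nonneg_right (hd_sq i) (sq_nonneg _)
  -- f₁ = cc * g
  have hccid : cc * (cr 1 - cr 2) = cr 1 := by
    by_cases hk2 : 2 ≤ k
    · have hcr2 : cr 2 = ((n - 2).choose (k - 2) : ℝ) := by simp [hcr_def, hk2]
      have hpas : ((n - 1).choose (k - 1) : ℝ)
          = ((n - 2).choose (k - 2) : ℝ) + ((n - 2).choose (k - 1) : ℝ) := by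
        exact_mod_cast nat_pascal hk2 hkn
      have hid2 : ((n : ℝ) - 1) * ((n - 2).choose (k - 1) : ℝ)
          = ((n : ℝ) - (k : ℝ)) * ((n - 1).choose (k - 1) : ℝ) := by
        have h := nat_id2 (n := n) (k := k) hk (by omega)
        have h' : (((n - 1) * (n - 2).choose (k - 1) : ℕ) : ℝ)
            = (((n - k) * (n - 1).choose (k - 1) : ℕ) : ℝ) := by exact_mod_cast h
        push_cast [Nat.cast_sub (by omega : 1 ≤ n), Nat.cast_sub hkn] at h'
        linarith
      have hdiff : cr 1 - cr 2 = ((n - 2).choose (k - 1) : ℝ) := by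
        rw [hcr1, hcr2]; linarith
      rw [hcc, hdiff, hcr1, div_mul_eq_mul_div, div_eq_iff (ne_of_gt hnkR)]
      linear_combination hid2
    · have hk1 : k = 1 := by omega
      have hcr2 : cr 2 = 0 := by simp [hcr_def, hk1]
      have h1n : (1 : ℝ) < (n : ℝ) := by exact_mod_cast (by omega : 1 < n)
      have hne : (n : ℝ) - 1 ≠ 0 := by linarith
      rw [hcc, hcr2, hcr1, hk1]
      simp only [Nat.sub_self, Nat.choose_zero_right, Nat.cast_one, sub_zero, mul_one]
      exact div_self hne
  have hα1 : α * ((n - 1).choose (k - 1) : ℝ) = (F.card : ℝ) * ((k : ℝ) / (n : ℝ)) := by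
    rw [hα]
    clear hdeg
    field_simp
    linear_combination (-1 : ℝ) * hID1R
  have hfφ : ∀ j, ∑ A : {A : Finset (Fin n) // A.card = k}, f A * φ j A = cr 1 * d j := by
    intro j
    rw [hf, hφ]
    dsimp only
    calc ∑ A : {A : Finset (Fin n) // A.card = k},
          (if A ∈ F then (1 : ℝ) else 0) * ((if j ∈ A.val then (1 : ℝ) else 0) - (k : ℝ) / n)
        = ∑ A : {A : Finset (Fin n) // A.card = k},
            (if A ∈ F then ((if j ∈ A.val then (1 : ℝ) else 0) - (k : ℝ) / n) else 0) := by
          apply Finset.sum_congr rfl; intro A _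
          split_ifs <;> ring
      _ = ∑ A ∈ F, ((if j ∈ A.val then (1 : ℝ) else 0) - (k : ℝ) / n) := by
          rw [Finset.sum_ite_mem, Finset.univ_inter]
      _ = (∑ A ∈ F, (if j ∈ A.val then (1 : ℝ) else 0)) - (F.card : ℝ) * ((k : ℝ) / n) := by
          rw [Finset.sum_sub_distrib, Finset.sum_const, nsmul_eq_mul]
      _ = ((F.filter (fun A => j ∈ A.val)).card : ℝ) - (F.card : ℝ) * ((k : ℝ) / n) := by
          rw [Finset.sum_boole]
      _ = γ j * ((n - 1).choose (k - 1) : ℝ) - α * ((n - 1).choose (k - 1) : ℝ) := by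
          rw [hdeg j, hα1]
      _ = cr 1 * d j := by
          rw [hcr1, hd_def]; ring
  have hgχ : ∀ j, ∑ A : {A : Finset (Fin n) // A.card = k},
      g A * (if j ∈ A.val then (1 : ℝ) else 0) = (cr 1 - cr 2) * d j := by
    intro j
    calc ∑ A : {A : Finset (Fin n) // A.card = k}, g A * (if j ∈ A.val then (1 : ℝ) else 0)
        = ∑ A : {A : Finset (Fin n) // A.card = k}, ∑ i,
            (if insert i ({j} : Finset (Fin n)) ⊆ A.val then d i else 0) := by
          apply Finset.sum_congr rfl; intro A _
          have h0 : g A = ∑ i, (if i ∈ A.val then d i else 0) := by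
            rw [hg_def]; dsimp only; rw [Finset.sum_ite_mem, Finset.univ_inter]
          rw [h0, Finset.sum_mul]
          apply Finset.sum_congr rfl; intro i _
          by_cases hi : i ∈ A.val <;> by_cases hj : j ∈ A.val <;>
            simp [Finset.insert_subset_iff, hi, hj]
      _ = ∑ i, ∑ A : {A : Finset (Fin n) // A.card = k},
            (if insert i ({j} : Finset (Fin n)) ⊆ A.val then d i else 0) := Finset.sum_comm
      _ = ∑ i, d i * cr (insert i ({j} : Finset (Fin n))).card :=
          Finset.sum_congr rfl (fun i _ => hAcountW _ _)
      _ = (cr 1 - cr 2) * d j := by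
          rw [step1 d cr hd0 ({j} : Finset (Fin n))]
          simp
  have hgsum0 : ∑ A : {A : Finset (Fin n) // A.card = k}, g A = 0 := by
    calc ∑ A : {A : Finset (Fin n) // A.card = k}, g A
        = ∑ A : {A : Finset (Fin n) // A.card = k}, ∑ i,
            (if ({i} : Finset (Fin n)) ⊆ A.val then d i else 0) := by
          apply Finset.sum_congr rfl; intro A _
          have e1 : ∑ i, (if ({i} : Finset (Fin n)) ⊆ A.val then d i else 0)
              = ∑ i, (if i ∈ A.val then d i else 0) :=
            Finset.sum_congr rfl (fun i _ => by simp [Finset.singleton_subset_iff])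
          rw [e1, Finset.sum_ite_mem, Finset.univ_inter, hg_def]
      _ = ∑ i, ∑ A : {A : Finset (Fin n) // A.card = k},
            (if ({i} : Finset (Fin n)) ⊆ A.val then d i else 0) := Finset.sum_comm
      _ = ∑ i, d i * cr 1 := by
          apply Finset.sum_congr rfl; intro i _
          rw [hAcountW _ _]
          simp
      _ = 0 := by rw [← Finset.sum_mul, hd0, zero_mul]
  have hGφ : ∀ j, ∑ A : {A : Finset (Fin n) // A.card = k},
      (cc * g A) * φ j A = cc * ((cr 1 - cr 2) * d j) := by
    intro j
    rw [hφ]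
    dsimp only
    calc ∑ A : {A : Finset (Fin n) // A.card = k},
          (cc * g A) * ((if j ∈ A.val then (1 : ℝ) else 0) - (k : ℝ) / n)
        = ∑ A : {A : Finset (Fin n) // A.card = k},
            (cc * (g A * (if j ∈ A.val then (1 : ℝ) else 0)) - cc * ((k : ℝ) / n) * g A) := by
          apply Finset.sum_congr rfl; intro A _; ring
      _ = cc * (∑ A : {A : Finset (Fin n) // A.card = k},
            g A * (if j ∈ A.val then (1 : ℝ) else 0))
          - cc * ((k : ℝ) / n) * ∑ A : {A : Finset (Fin n) // A.card = k}, g A := by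
          rw [Finset.sum_sub_distrib, Finset.mul_sum, Finset.mul_sum]
      _ = cc * ((cr 1 - cr 2) * d j) := by
          rw [hgχ j, hgsum0]; ring
  have horthG : ∀ j, ∑ A : {A : Finset (Fin n) // A.card = k},
      (f A - cc * g A) * φ j A = 0 := by
    intro j
    have hsplit : ∑ A : {A : Finset (Fin n) // A.card = k}, (f A - cc * g A) * φ j A
        = (∑ A : {A : Finset (Fin n) // A.card = k}, f A * φ j A)
          - ∑ A : {A : Finset (Fin n) // A.card = k}, (cc * g A) * φ j A := by
      rw [← Finset.sum_sub_distrib]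
      apply Finset.sum_congr rfl; intro A _; ring
    rw [hsplit, hfφ j, hGφ j]
    linear_combination (-(d j)) * hccid
  have hf₁eq : ∀ A : {A : Finset (Fin n) // A.card = k}, f₁ A = cc * g A := by
    obtain ⟨b, hb⟩ := (Submodule.mem_span_range_iff_exists_fun ℝ).mp hf₁mem
    have hf₁app : ∀ A : {A : Finset (Fin n) // A.card = k}, f₁ A = ∑ i, b i * φ i A := by
      intro A
      rw [← hb]
      rw [Finset.sum_apply]
      apply Finset.sum_congr rfl; intro i _
      simp
    have hgrep : ∀ A : {A : Finset (Fin n) // A.card = k},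
        ∑ i, (cc * d i) * φ i A = cc * g A := by
      intro A
      rw [hφ, hg_def]
      dsimp only
      calc ∑ i, (cc * d i) * ((if i ∈ A.val then (1 : ℝ) else 0) - (k : ℝ) / n)
          = ∑ i, (cc * (if i ∈ A.val then d i else 0) - cc * ((k : ℝ) / n) * d i) := by
            apply Finset.sum_congr rfl; intro i _
            split_ifs <;> ring
        _ = cc * (∑ i, (if i ∈ A.val then d i else 0)) - cc * ((k : ℝ) / n) * ∑ i, d i := by
            rw [Finset.sum_sub_distrib, Finset.mul_sum, Finset.mul_sum]
        _ = cc * ∑ i ∈ A.val, d i := by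
            rw [hd0, Finset.sum_ite_mem, Finset.univ_inter]; ring
    have horth2 : ∀ j, ∑ A : {A : Finset (Fin n) // A.card = k},
        (f₁ A - cc * g A) * φ j A = 0 := by
      intro j
      have hsplit : ∑ A : {A : Finset (Fin n) // A.card = k}, (f₁ A - cc * g A) * φ j A
          = (∑ A : {A : Finset (Fin n) // A.card = k}, (f A - cc * g A) * φ j A)
            - ∑ A : {A : Finset (Fin n) // A.card = k}, (f A - f₁ A) * φ j A := by
        rw [← Finset.sum_sub_distrib]
        apply Finset.sum_congr rfl; intro A _; ring
      rw [hsplit, horthG j, hf₁orth j, sub_zero]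
    have hzero : ∑ A : {A : Finset (Fin n) // A.card = k}, (f₁ A - cc * g A) ^ 2 = 0 := by
      have hrepr : ∀ A : {A : Finset (Fin n) // A.card = k},
          f₁ A - cc * g A = ∑ i, (b i - cc * d i) * φ i A := by
        intro A
        rw [hf₁app A, ← hgrep A, ← Finset.sum_sub_distrib]
        apply Finset.sum_congr rfl; intro i _; ring
      calc ∑ A : {A : Finset (Fin n) // A.card = k}, (f₁ A - cc * g A) ^ 2
          = ∑ A : {A : Finset (Fin n) // A.card = k}, ∑ i,
              (b i - cc * d i) * ((f₁ A - cc * g A) * φ i A) := by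
            apply Finset.sum_congr rfl; intro A _
            rw [sq]
            nth_rewrite 2 [hrepr A]
            rw [Finset.mul_sum]
            apply Finset.sum_congr rfl; intro i _; ring
        _ = ∑ i, (b i - cc * d i) * ∑ A : {A : Finset (Fin n) // A.card = k},
              (f₁ A - cc * g A) * φ i A := by
            rw [Finset.sum_comm]
            apply Finset.sum_congr rfl; intro i _
            rw [Finset.mul_sum]
        _ = 0 := by
            apply Finset.sum_eq_zero
            intro i _
            rw [horth2 i, mul_zero]
    intro A
    have h2 := (Finset.sum_eq_zero_iff_of_nonneg
      (fun A _ => sq_nonneg (f₁ A - cc * g A))).mp hzero A (Finset.mem_univ A)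
    have h3 : f₁ A - cc * g A = 0 := by
      have := sq_eq_zero_iff.mp h2
      exact this
    linarith
  -- sums of squares
  have hg2sum : ∑ A : {A : Finset (Fin n) // A.card = k}, g A ^ 2 = (cr 1 - cr 2) * s2 := by
    have e2 : ∀ A : {A : Finset (Fin n) // A.card = k}, g A ^ 2
        = ∑ i, ∑ j, (if insert j ({i} : Finset (Fin n)) ⊆ A.val then d i * d j else 0) := by
      intro A
      have h0 : g A = ∑ i, (if i ∈ A.val then d i else 0) := by
        rw [hg_def]; dsimp only; rw [Finset.sum_ite_mem, Finset.univ_inter]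
      rw [h0, sq, Finset.sum_mul_sum]
      apply Finset.sum_congr rfl; intro i _
      apply Finset.sum_congr rfl; intro j _
      by_cases hi : i ∈ A.val <;> by_cases hj : j ∈ A.val <;>
        simp [Finset.insert_subset_iff, hi, hj]
    calc ∑ A : {A : Finset (Fin n) // A.card = k}, g A ^ 2
        = ∑ A : {A : Finset (Fin n) // A.card = k}, ∑ i, ∑ j,
            (if insert j ({i} : Finset (Fin n)) ⊆ A.val then d i * d j else 0) :=
          Finset.sum_congr rfl (fun A _ => e2 A)
      _ = ∑ i, ∑ j, (d i * d j) * cr (insert j ({i} : Finset (Fin n))).card := by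
          rw [Finset.sum_comm]
          apply Finset.sum_congr rfl; intro i _
          rw [Finset.sum_comm]
          apply Finset.sum_congr rfl; intro j _
          exact hAcountW _ _
      _ = ∑ i, d i * ∑ j, d j * cr (insert j ({i} : Finset (Fin n))).card := by
          apply Finset.sum_congr rfl; intro i _
          rw [Finset.mul_sum]
          apply Finset.sum_congr rfl; intro j _
          ring
      _ = ∑ i, d i * ((cr 1 - cr 2) * d i) := by
          apply Finset.sum_congr rfl; intro i _
          rw [step1 d cr hd0 ({i} : Finset (Fin n))]
          simp
      _ = (cr 1 - cr 2) * s2 := by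
          rw [hs2_def, Finset.mul_sum]
          apply Finset.sum_congr rfl; intro i _
          ring
  have hf2sum : ∑ A : {A : Finset (Fin n) // A.card = k}, f A ^ 2 = (F.card : ℝ) := by
    rw [hf]
    simp only [apply_ite (· ^ (2:ℕ)), one_pow, zero_pow, OfNat.ofNat_ne_zero, ne_eq,
      not_false_iff]
    suffices h : Finset.univ.filter (fun A => A ∈ F) = F by rw [Finset.sum_boole, h]
    ext x
    simp
  have hηid : η * (F.card : ℝ) = cc * cr 1 * s2 := by
    rw [← hf2sum, hη]
    calc ∑ A, f₁ A ^ 2 = ∑ A : {A : Finset (Fin n) // A.card = k}, (cc * g A) ^ 2 :=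
          Finset.sum_congr rfl (fun A _ => by rw [hf₁eq A])
      _ = cc ^ 2 * ∑ A : {A : Finset (Fin n) // A.card = k}, g A ^ 2 := by
          rw [Finset.mul_sum]; apply Finset.sum_congr rfl; intros; ring
      _ = cc * (cc * (cr 1 - cr 2)) * s2 := by rw [hg2sum]; ring
      _ = cc * cr 1 * s2 := by rw [hccid]
  -- sum over F of g
  have hFg : ∑ A ∈ F, g A = cr 1 * s2 := by
    calc ∑ A ∈ F, g A = ∑ A ∈ F, ∑ i, (if i ∈ A.val then d i else 0) := by
          apply Finset.sum_congr rfl; intro A _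
          rw [hg_def]; dsimp only; rw [Finset.sum_ite_mem, Finset.univ_inter]
      _ = ∑ i, ∑ A ∈ F, (if i ∈ A.val then d i else 0) := Finset.sum_comm
      _ = ∑ i, d i * ((F.filter (fun A => i ∈ A.val)).card : ℝ) := by
          apply Finset.sum_congr rfl; intro i _
          rw [← Finset.sum_boole, Finset.mul_sum]
          apply Finset.sum_congr rfl; intro A _
          split_ifs <;> simp
      _ = ∑ i, d i * (γ i * ((n - 1).choose (k - 1) : ℝ)) :=
          Finset.sum_congr rfl (fun i _ => by rw [hdeg i])
      _ = ((n - 1).choose (k - 1) : ℝ) * ∑ i, (d i ^ 2 + d i * α) := by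
          rw [Finset.mul_sum]
          apply Finset.sum_congr rfl; intro i _
          have : γ i = d i + α := by rw [hd_def]; ring
          rw [this]; ring
      _ = cr 1 * s2 := by
          rw [Finset.sum_add_distrib, ← Finset.sum_mul, hd0, hcr1, hs2_def]
          ring
  -- Cauchy-Schwarz
  have hCS : (∑ A ∈ F, g A) ^ 4
      ≤ (F.card : ℝ) ^ 3 * ∑ A : {A : Finset (Fin n) // A.card = k}, g A ^ 4 := by
    have h1 : (∑ A ∈ F, g A) ^ 2 ≤ (F.card : ℝ) * ∑ A ∈ F, g A ^ 2 := by
      have := Finset.sum_mul_sq_le_sq_mul_sq F (fun _ => (1 : ℝ)) g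
      simpa using this
    have h2 : (∑ A ∈ F, g A ^ 2) ^ 2 ≤ (F.card : ℝ) * ∑ A ∈ F, (g A ^ 2) ^ 2 := by
      have := Finset.sum_mul_sq_le_sq_mul_sq F (fun _ => (1 : ℝ)) (fun A => g A ^ 2)
      simpa using this
    have h3 : ∑ A ∈ F, (g A ^ 2) ^ 2 ≤ ∑ A : {A : Finset (Fin n) // A.card = k}, g A ^ 4 := by
      have e : ∀ A ∈ F, (g A ^ 2) ^ 2 = g A ^ 4 := fun A _ => by ring
      rw [Finset.sum_congr rfl e]
      apply Finset.sum_le_sum_of_subset_of_nonneg (Finset.subset_univ F)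
      intro A _ _
      have : g A ^ 4 = (g A ^ 2) ^ 2 := by ring
      rw [this]; positivity
    have hgsq : (0:ℝ) ≤ ∑ A ∈ F, g A ^ 2 := Finset.sum_nonneg (fun A _ => sq_nonneg _)
    calc (∑ A ∈ F, g A) ^ 4 = ((∑ A ∈ F, g A) ^ 2) ^ 2 := by ring
      _ ≤ ((F.card : ℝ) * ∑ A ∈ F, g A ^ 2) ^ 2 := pow_le_pow_left₀ (sq_nonneg _) h1 2
      _ = (F.card : ℝ) ^ 2 * (∑ A ∈ F, g A ^ 2) ^ 2 := by ring
      _ ≤ (F.card : ℝ) ^ 2 * ((F.card : ℝ) * ∑ A ∈ F, (g A ^ 2) ^ 2) :=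
          mul_le_mul_of_nonneg_left h2 (sq_nonneg _)
      _ = (F.card : ℝ) ^ 3 * ∑ A ∈ F, (g A ^ 2) ^ 2 := by ring
      _ ≤ (F.card : ℝ) ^ 3 * ∑ A : {A : Finset (Fin n) // A.card = k}, g A ^ 4 :=
          mul_le_mul_of_nonneg_left h3 (pow_nonneg (le_of_lt hFpos) 3)
  have hquartic : ∑ A : {A : Finset (Fin n) // A.card = k}, g A ^ 4
      = 3 * (cr 2 - 2 * cr 3 + cr 4) * s2 ^ 2
        + (cr 1 - 7 * cr 2 + 12 * cr 3 - 6 * cr 4) * s4 := by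
    rw [hg_def, hs2_def, hs4_def]
    exact quartic_id d cr hd0 hcount
  -- coefficient bounds
  have hc43 : cr 4 ≤ cr 3 := by
    by_cases h4 : 4 ≤ k
    · have hcr4 : cr 4 = ((n - 4).choose (k - 4) : ℝ) := by simp [hcr_def, h4]
      have hcr3 : cr 3 = ((n - 3).choose (k - 3) : ℝ) := by
        simp [hcr_def, (by omega : 3 ≤ k)]
      rw [hcr4, hcr3]
      exact_mod_cast nat_p3 h4 hkn
    · have h0 : cr 4 = 0 := by simp [hcr_def]; omega
      rw [h0]
      exact hcrnn 3
  have hP4R : (n.choose k : ℝ) * (cr 2 - cr 3) ≤ cr 1 ^ 2 := by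
    by_cases hk2 : 2 ≤ k
    · have hcr2 : cr 2 = ((n - 2).choose (k - 2) : ℝ) := by simp [hcr_def, hk2]
      have hdiff : cr 2 - cr 3 = ((n - 3).choose (k - 2) : ℝ) := by
        by_cases hk3 : 3 ≤ k
        · have hcr3 : cr 3 = ((n - 3).choose (k - 3) : ℝ) := by simp [hcr_def, hk3]
          have hpas2 : (n - 2).choose (k - 2) = (n - 3).choose (k - 3) + (n - 3).choose (k - 2) := by
            have h := nat_pascal (n := n - 1) (k := k - 1) (by omega) (by omega)
            have e1 : n - 1 - 1 = n - 2 := by omega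
            have e2 : n - 1 - 2 = n - 3 := by omega
            have e3 : k - 1 - 1 = k - 2 := by omega
            have e4 : k - 1 - 2 = k - 3 := by omega
            rwa [e1, e2, e3, e4] at h
          rw [hcr2, hcr3, hpas2]
          push_cast
          ring
        · have hk2e : k = 2 := by omega
          have hcr3 : cr 3 = 0 := by simp [hcr_def]; omega
          rw [hcr2, hcr3, hk2e]
          simp
      rw [hdiff, hcr1, sq]
      exact_mod_cast nat_p4 hk2 hn
    · have hk1 : k = 1 := by omega
      have hcr2 : cr 2 = 0 := by simp [hcr_def, hk1]
      have hcr3 : cr 3 = 0 := by simp [hcr_def, hk1]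
      rw [hcr2, hcr3]
      simp
      positivity
  have hP5R : cr 1 - 7 * cr 2 + 12 * cr 3 - 6 * cr 4 ≤ cr 1 := by
    have h : 12 * cr 3 ≤ 7 * cr 2 + 6 * cr 4 := by
      by_cases hk3 : 3 ≤ k
      · have hcr3 : cr 3 = ((n - 3).choose (k - 3) : ℝ) := by simp [hcr_def, hk3]
        have hcr2 : cr 2 = ((n - 2).choose (k - 2) : ℝ) := by
          simp [hcr_def, (by omega : 2 ≤ k)]
        have h5 : (12 * ((n - 3).choose (k - 3)) : ℝ) ≤ (7 * ((n - 2).choose (k - 2)) : ℝ) := by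
          exact_mod_cast nat_p5 hk3 hn
        have h6 := hcrnn 4
        rw [hcr3, hcr2]
        linarith
      · have hcr3 : cr 3 = 0 := by simp [hcr_def]; omega
        rw [hcr3]
        have := hcrnn 2
        have := hcrnn 4
        linarith
    linarith
  -- assemble
  have hupper : ∑ A : {A : Finset (Fin n) // A.card = k}, g A ^ 4
      ≤ 3 * (cr 1 ^ 2 / (n.choose k : ℝ)) * s2 ^ 2 + cr 1 * γmax ^ 2 * s2 := by
    rw [hquartic]
    have t1 : cr 2 - 2 * cr 3 + cr 4 ≤ cr 1 ^ 2 / (n.choose k : ℝ) := by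
      have h1 : cr 2 - 2 * cr 3 + cr 4 ≤ cr 2 - cr 3 := by linarith
      have h2 : cr 2 - cr 3 ≤ cr 1 ^ 2 / (n.choose k : ℝ) := by
        rw [le_div_iff₀ hNpos, mul_comm]
        exact hP4R
      linarith
    have t2 : (cr 1 - 7 * cr 2 + 12 * cr 3 - 6 * cr 4) * s4 ≤ cr 1 * γmax ^ 2 * s2 := by
      calc (cr 1 - 7 * cr 2 + 12 * cr 3 - 6 * cr 4) * s4 ≤ cr 1 * s4 :=
            mul_le_mul_of_nonneg_right hP5R hs4nn
        _ ≤ cr 1 * (γmax ^ 2 * s2) := mul_le_mul_of_nonneg_left hs4le (le_of_lt hcr1pos)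
        _ = cr 1 * γmax ^ 2 * s2 := by ring
    have t1' : 3 * (cr 2 - 2 * cr 3 + cr 4) * s2 ^ 2
        ≤ 3 * (cr 1 ^ 2 / (n.choose k : ℝ)) * s2 ^ 2 := by
      apply mul_le_mul_of_nonneg_right _ (sq_nonneg s2)
      linarith
    linarith
  have hmain : (cr 1 * s2) ^ 4
      ≤ (F.card : ℝ) ^ 3 * (3 * (cr 1 ^ 2 / (n.choose k : ℝ)) * s2 ^ 2 + cr 1 * γmax ^ 2 * s2) := by
    calc (cr 1 * s2) ^ 4 = (∑ A ∈ F, g A) ^ 4 := by rw [hFg]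
      _ ≤ (F.card : ℝ) ^ 3 * ∑ A : {A : Finset (Fin n) // A.card = k}, g A ^ 4 := hCS
      _ ≤ (F.card : ℝ) ^ 3 * (3 * (cr 1 ^ 2 / (n.choose k : ℝ)) * s2 ^ 2 + cr 1 * γmax ^ 2 * s2) :=
          mul_le_mul_of_nonneg_left hupper (pow_nonneg (le_of_lt hFpos) 3)
  -- conclude
  by_cases hs2z : s2 = 0
  · have hη0 : η = 0 := by
      have h1 : η * (F.card : ℝ) = 0 := by rw [hηid, hs2z]; ring
      exact (mul_eq_zero.mp h1).resolve_right (ne_of_gt hFpos)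
    have h2 : cc ^ 3 * γmax ^ 2 + 3 * cc ^ 2 * (0:ℝ) * α = cc ^ 3 * γmax ^ 2 := by ring
    rw [hη0, h2]
    norm_num
    positivity
  · have hs2pos : 0 < s2 := lt_of_le_of_ne hs2nn (Ne.symm hs2z)
    have hkey : (cr 1 * s2) ^ 3
        ≤ γmax ^ 2 * (F.card : ℝ) ^ 3 + 3 * cr 1 * s2 * α * (F.card : ℝ) ^ 2 := by
      have hpos : 0 < cr 1 * s2 := mul_pos hcr1pos hs2pos
      apply le_of_mul_le_mul_right _ hpos
      calc (cr 1 * s2) ^ 3 * (cr 1 * s2) = (cr 1 * s2) ^ 4 := by ring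
        _ ≤ (F.card : ℝ) ^ 3 * (3 * (cr 1 ^ 2 / (n.choose k : ℝ)) * s2 ^ 2 + cr 1 * γmax ^ 2 * s2) :=
            hmain
        _ = (γmax ^ 2 * (F.card : ℝ) ^ 3 + 3 * cr 1 * s2 * α * (F.card : ℝ) ^ 2) * (cr 1 * s2) := by
            rw [hα]
            clear hdeg
            field_simp
            ring
    have hηval : η = cc * (cr 1 * s2 / (F.card : ℝ)) := by
      clear hdeg
      field_simp
      rw [mul_comm η (F.card:ℝ)] at hηid ⊢
      rw [hηid]
    set u : ℝ := cr 1 * s2 / (F.card : ℝ) with hu_def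
    have hunn : 0 ≤ u := by clear hdeg; positivity
    have hu3 : u ^ 3 ≤ γmax ^ 2 + 3 * u * α := by
      rw [hu_def, div_pow, div_le_iff₀ (by clear hdeg; positivity : (0:ℝ) < (F.card:ℝ) ^ 3)]
      calc (cr 1 * s2) ^ 3 ≤ γmax ^ 2 * (F.card : ℝ) ^ 3 + 3 * cr 1 * s2 * α * (F.card : ℝ) ^ 2 :=
            hkey
        _ = (γmax ^ 2 + 3 * (cr 1 * s2 / (F.card : ℝ)) * α) * (F.card : ℝ) ^ 3 := by
            clear hdeg
            field_simp
    calc η ^ 3 = cc ^ 3 * u ^ 3 := by rw [hηval]; ring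
      _ ≤ cc ^ 3 * (γmax ^ 2 + 3 * u * α) :=
          mul_le_mul_of_nonneg_left hu3 (by positivity)
      _ = cc ^ 3 * γmax ^ 2 + 3 * cc ^ 2 * (cc * u) * α := by ring
      _ = cc ^ 3 * γmax ^ 2 + 3 * cc ^ 2 * η * α := by rw [← hηval]
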